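/- If d > 0 and points c₁,...,cₙ, c ∈ ℂⁿ satisfy φₙ(cᵢ,cⱼ) = (2+2/n)·d² for all 1 ≤ i < j ≤ n and φₙ(cᵢ,c) = d² for all 1 ≤ i ≤ n, then c₁,...,cₙ,c are affinely independent. -/

import Mathlib

def finLastComplEquiv (n : ℕ) : Fin n ≃ {x : Fin (n + 1) // x ≠ Fin.last n} where
  toFun j := ⟨j.castSucc, (Fin.castSucc_lt_last j).ne⟩
  invFun x := x.1.castPred x.2
  left_inv j := by simp
  right_inv x := by simp

noncomputable def phi (n : ℕ) (x y : Fin n → ℂ) : ℂ := ∑ i, (x i - y i) ^ 2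

theorem stmt4 (n : ℕ) (hn : 1 ≤ n) (d : ℝ) (hd : 0 < d)
    (c : Fin n → (Fin n → ℂ)) (c' : Fin n → ℂ)
    (h1 : ∀ i j : Fin n, i < j → phi n (c i) (c j) = (2 + 2 / (n : ℂ)) * (d : ℂ) ^ 2)
    (h2 : ∀ i : Fin n, phi n (c i) c' = (d : ℂ) ^ 2) :
    AffineIndependent ℂ (Fin.snoc c c') := by
  classical
  have hn0 : (n : ℂ) ≠ 0 := Nat.cast_ne_zero.mpr (by omega)
  have hd0 : (d : ℂ) ≠ 0 := by exact_mod_cast (Complex.ofReal_ne_zero.mpr hd.ne')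
  set v : Fin n → (Fin n → ℂ) := fun i k => c i k - c' k with hv
  have hBd : ∀ i, (∑ k, v i k * v i k) = (d : ℂ) ^ 2 := by
    intro i
    have := h2 i
    simp only [phi] at this
    rw [← this]
    exact Finset.sum_congr rfl (fun k _ => by simp [hv]; ring)
  have hBsym : ∀ i j, (∑ k, v i k * v j k) = ∑ k, v j k * v i k := by
    intro i j; exact Finset.sum_congr rfl (fun k _ => mul_comm _ _)
  have hBoff : ∀ i j : Fin n, i ≠ j → (∑ k, v i k * v j k) = -(d : ℂ) ^ 2 / n := by
    have key : ∀ i j : Fin n, i < j → (∑ k, v i k * v j k) = -(d : ℂ) ^ 2 / n := by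
      intro i j hij
      have h := h1 i j hij
      simp only [phi] at h
      have expand : (∑ k, (c i k - c j k) ^ 2)
          = (∑ k, v i k * v i k) + (∑ k, v j k * v j k) - 2 * ∑ k, v i k * v j k := by
        have step : ∀ k : Fin n, (c i k - c j k) ^ 2
            = v i k * v i k + v j k * v j k - 2 * (v i k * v j k) := fun k => by
          simp only [hv]; ring
        rw [Finset.sum_congr rfl (fun k _ => step k), Finset.sum_sub_distrib,
          Finset.sum_add_distrib, Finset.mul_sum]
      rw [expand, hBd i, hBd j] at h
      field_simp at h ⊢
      linear_combination -h / 2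
    intro i j hij
    rcases lt_or_gt_of_ne hij with h | h
    · exact key i j h
    · rw [hBsym]; exact key j i h
  -- linear independence of v
  have hli : LinearIndependent ℂ v := by
    rw [Fintype.linearIndependent_iff]
    intro g hg
    -- for each j, ∑ i, g i * B i j = 0
    have hrow : ∀ j : Fin n, (∑ i, g i * ∑ k, v i k * v j k) = 0 := by
      intro j
      have : (∑ i, g i * ∑ k, v i k * v j k) = ∑ k, (∑ i, g i * v i k) * v j k := by
        rw [show (∑ i, g i * ∑ k, v i k * v j k)
            = ∑ i, ∑ k, g i * (v i k * v j k) from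
          Finset.sum_congr rfl (fun i _ => Finset.mul_sum _ _ _), Finset.sum_comm]
        refine Finset.sum_congr rfl (fun k _ => ?_)
        rw [Finset.sum_mul]
        exact Finset.sum_congr rfl (fun i _ => by ring)
      rw [this]
      have hzero : ∀ k, (∑ i, g i * v i k) = 0 := by
        intro k
        have := congrFun hg k
        simpa [Finset.sum_apply] using this
      simp [hzero]
    set S : ℂ := ∑ i, g i with hS
    have key : ∀ j : Fin n, g j * ((n : ℂ) + 1) = S := by
      intro j
      have h := hrow j
      have split : (∑ i, g i * ∑ k, v i k * v j k)
          = g j * ((d : ℂ) ^ 2 + (d : ℂ) ^ 2 / n) + S * (-(d : ℂ) ^ 2 / n) := by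
        have : ∀ i : Fin n, g i * (∑ k, v i k * v j k)
            = (if i = j then g j * ((d : ℂ) ^ 2 + (d : ℂ) ^ 2 / n) else 0)
              + g i * (-(d : ℂ) ^ 2 / n) := by
          intro i
          by_cases hij : i = j
          · subst hij; rw [hBd i]; simp; field_simp; ring
          · rw [hBoff i j hij]; simp [hij]
        rw [Finset.sum_congr rfl (fun i _ => this i), Finset.sum_add_distrib,
          Finset.sum_ite_eq' Finset.univ j, ← Finset.sum_mul]
        simp [hS]
      rw [split] at h
      have hd2 : (d : ℂ) ^ 2 ≠ 0 := pow_ne_zero 2 hd0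
      field_simp at h
      -- h : some linear relation; derive g j * (n+1) = S
      have : (g j * ((n : ℂ) + 1) - S) * ((d : ℂ) ^ 2) = 0 := by linear_combination h
      rcases mul_eq_zero.mp this with h' | h'
      · exact sub_eq_zero.mp h'
      · exact absurd h' hd2
    have hSsum : S * ((n : ℂ) + 1) = (n : ℂ) * S := by
      calc S * ((n : ℂ) + 1) = ∑ j : Fin n, g j * ((n : ℂ) + 1) := by
            rw [← Finset.sum_mul]
          _ = ∑ _j : Fin n, S := Finset.sum_congr rfl (fun j _ => key j)
          _ = (n : ℂ) * S := by simp [Finset.sum_const, nsmul_eq_mul]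
    have hS0 : S = 0 := by
      have : S * 1 = 0 := by linear_combination hSsum
      simpa using this
    intro j
    have := key j
    rw [hS0] at this
    have hn1 : (n : ℂ) + 1 ≠ 0 := by
      intro h
      have : ((n : ℂ) + 1) = ((n + 1 : ℕ) : ℂ) := by push_cast; ring
      rw [this] at h
      exact (Nat.cast_ne_zero.mpr (Nat.succ_ne_zero n)) h
    exact (mul_eq_zero.mp this).resolve_right hn1
  -- transfer to affine independence
  set p : Fin (n + 1) → (Fin n → ℂ) := Fin.snoc c c' with hp
  rw [affineIndependent_iff_linearIndependent_vsub ℂ p (Fin.last n)]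
  rw [← linearIndependent_equiv (finLastComplEquiv n)]
  have heq : (fun i : {x : Fin (n + 1) // x ≠ Fin.last n} =>
      p (i : Fin (n + 1)) -ᵥ p (Fin.last n)) ∘ (finLastComplEquiv n) = v := by
    funext j
    simp only [Function.comp_apply, finLastComplEquiv, Equiv.coe_fn_mk, vsub_eq_sub, hp,
      Fin.snoc_castSucc, Fin.snoc_last]
    show Fin.snoc (α := fun _ => Fin n → ℂ) c c' (Fin.castSucc j) - c' = v j
    exact (congrArg (· - c') (Fin.snoc_castSucc (α := fun _ => Fin n → ℂ) c' c j)).trans rfl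
  rw [heq]
  exact hli
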